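/- Let m, p be natural numbers, Q₁ a real m×m matrix, Q₂ a real m×p matrix, and Q₄ a real p×p matrix with Q₄ᵀ = Q₄ and Q₄ invertible, and let w ∈ ℝ^p. Then the matrix-valued function f(τ) := Q₁ - Q₂ * (Q₄ + τ • (w wᵀ))⁻¹ * Q₂ᵀ has derivative at τ = 0 equal to the rank-one matrix (Q_ac *ᵥ w) (Q_ac *ᵥ w)ᵀ, where Q_ac = -(Q₂ * Q₄⁻¹); i.e. HasDerivAt f ((Q_ac *ᵥ w)(Q_ac *ᵥ w)ᵀ) 0. -/

import Mathlib

open Matrix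

attribute [local instance] Matrix.normedAddCommGroup Matrix.normedSpace

lemma mul_vecMulVec_aux {p n q : ℕ} (M : Matrix (Fin n) (Fin p) ℝ) (a : Fin p → ℝ) (b : Fin q → ℝ) :
    M * vecMulVec a b = vecMulVec (M *ᵥ a) b := by
  ext i j
  simp [mul_apply, vecMulVec_apply, mulVec, dotProduct, Finset.sum_mul, mul_assoc]

lemma vecMulVec_mul_aux {p n q : ℕ} (a : Fin q → ℝ) (b : Fin p → ℝ) (M : Matrix (Fin p) (Fin n) ℝ) :
    vecMulVec a b * M = vecMulVec a (b ᵥ* M) := by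
  ext i j
  simp [mul_apply, vecMulVec_apply, vecMul, dotProduct, Finset.mul_sum, mul_assoc]

lemma vecMulVec_mul_vecMulVec {p : ℕ} (a b c d : Fin p → ℝ) :
    vecMulVec a b * vecMulVec c d = (b ⬝ᵥ c) • vecMulVec a d := by
  ext i j
  simp [mul_apply, vecMulVec_apply, dotProduct, Finset.sum_mul, Finset.mul_sum]
  ring_nf
  congr 1
  ext k
  ring

/-- Sherman–Morrison for a symmetric-free rank one update. -/
lemma sherman_morrison {p : ℕ} (Q4 : Matrix (Fin p) (Fin p) ℝ) (hQ4 : IsUnit Q4.det)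
    (w : Fin p → ℝ) (τ : ℝ) (h : 1 + τ * (w ⬝ᵥ Q4⁻¹ *ᵥ w) ≠ 0) :
    (Q4 + τ • vecMulVec w w)⁻¹ =
      Q4⁻¹ - (τ / (1 + τ * (w ⬝ᵥ Q4⁻¹ *ᵥ w))) • (Q4⁻¹ * vecMulVec w w * Q4⁻¹) := by
  set c := w ⬝ᵥ Q4⁻¹ *ᵥ w with hc
  set s := τ / (1 + τ * c) with hs
  apply Matrix.inv_eq_right_inv
  have hQinv : Q4 * Q4⁻¹ = 1 := Matrix.mul_nonsing_inv Q4 hQ4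
  have key : vecMulVec w w * Q4⁻¹ * vecMulVec w w = c • vecMulVec w w := by
    rw [vecMulVec_mul_aux, vecMulVec_mul_vecMulVec, hc, dotProduct_mulVec]
  have expand : (Q4 + τ • vecMulVec w w) * (Q4⁻¹ - s • (Q4⁻¹ * vecMulVec w w * Q4⁻¹))
      = 1 + (τ - s - τ * s * c) • (vecMulVec w w * Q4⁻¹) := by
    rw [Matrix.add_mul, Matrix.mul_sub, Matrix.mul_sub, hQinv]
    rw [Matrix.mul_smul, Matrix.mul_smul, Matrix.smul_mul, Matrix.smul_mul, smul_smul]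
    rw [← Matrix.mul_assoc, ← Matrix.mul_assoc, hQinv, Matrix.one_mul]
    have : vecMulVec w w * (Q4⁻¹ * vecMulVec w w * Q4⁻¹)
        = c • (vecMulVec w w * Q4⁻¹) := by
      calc vecMulVec w w * (Q4⁻¹ * vecMulVec w w * Q4⁻¹)
          = (vecMulVec w w * Q4⁻¹ * vecMulVec w w) * Q4⁻¹ := by
            rw [Matrix.mul_assoc, Matrix.mul_assoc, Matrix.mul_assoc]
        _ = c • (vecMulVec w w * Q4⁻¹) := by rw [key, Matrix.smul_mul]
    rw [this, smul_smul]
    module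
  rw [expand]
  have : τ - s - τ * s * c = 0 := by
    rw [hs]
    field_simp
    ring
  rw [this, zero_smul, add_zero]

theorem kron_reduction_sensitivity {m p : ℕ}
    (Q1 : Matrix (Fin m) (Fin m) ℝ) (Q2 : Matrix (Fin m) (Fin p) ℝ)
    (Q4 : Matrix (Fin p) (Fin p) ℝ) (hQ4sym : Q4ᵀ = Q4) (hQ4 : IsUnit Q4.det)
    (w : Fin p → ℝ) :
    HasDerivAt (fun τ : ℝ => Q1 - Q2 * (Q4 + τ • vecMulVec w w)⁻¹ * Q2ᵀ)
      (vecMulVec ((-(Q2 * Q4⁻¹)) *ᵥ w) ((-(Q2 * Q4⁻¹)) *ᵥ w)) 0 := by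
  set c := w ⬝ᵥ Q4⁻¹ *ᵥ w with hc
  set M := Q2 * (Q4⁻¹ * vecMulVec w w * Q4⁻¹) * Q2ᵀ with hM
  -- derivative of the scalar function
  have hden : HasDerivAt (fun τ : ℝ => 1 + τ * c) c 0 := by
    simpa using ((hasDerivAt_id (0:ℝ)).mul_const c).const_add 1
  have hnum : HasDerivAt (fun τ : ℝ => τ) 1 (0:ℝ) := hasDerivAt_id 0
  have hden0 : (1 : ℝ) + 0 * c ≠ 0 := by norm_num
  have hg : HasDerivAt (fun τ : ℝ => τ / (1 + τ * c)) 1 0 := by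
    have := hnum.div hden hden0
    simp at this
    exact this
  have hfull : HasDerivAt
      (fun τ : ℝ => (Q1 - Q2 * Q4⁻¹ * Q2ᵀ) + (τ / (1 + τ * c)) • M) ((1:ℝ) • M) 0 :=
    (hg.smul_const M).const_add _
  have heq : (fun τ : ℝ => Q1 - Q2 * (Q4 + τ • vecMulVec w w)⁻¹ * Q2ᵀ)
      =ᶠ[nhds (0:ℝ)] (fun τ : ℝ => (Q1 - Q2 * Q4⁻¹ * Q2ᵀ) + (τ / (1 + τ * c)) • M) := by
    have hopen : IsOpen {τ : ℝ | 1 + τ * c ≠ 0} :=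
      isOpen_ne.preimage (by continuity)
    have hmem : {τ : ℝ | 1 + τ * c ≠ 0} ∈ nhds (0:ℝ) :=
      hopen.mem_nhds (by simp)
    filter_upwards [hmem] with τ hτ
    rw [sherman_morrison Q4 hQ4 w τ hτ]
    rw [Matrix.mul_sub, Matrix.sub_mul, Matrix.mul_smul, Matrix.smul_mul]
    rw [← Matrix.mul_assoc]
    simp only [hM, Matrix.mul_assoc]
    abel
  have hM_eq : M = vecMulVec ((-(Q2 * Q4⁻¹)) *ᵥ w) ((-(Q2 * Q4⁻¹)) *ᵥ w) := by
    have hinvsym : Q4⁻¹ᵀ = Q4⁻¹ := by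
      rw [Matrix.transpose_nonsing_inv, hQ4sym]
    rw [hM]
    rw [show Q2 * (Q4⁻¹ * vecMulVec w w * Q4⁻¹) * Q2ᵀ
        = (Q2 * Q4⁻¹) * vecMulVec w w * (Q4⁻¹ * Q2ᵀ) by
      simp only [Matrix.mul_assoc]]
    rw [mul_vecMulVec_aux, vecMulVec_mul_aux]
    have h2 : Q4⁻¹ * Q2ᵀ = (Q2 * Q4⁻¹)ᵀ := by rw [Matrix.transpose_mul, hinvsym]
    rw [h2, Matrix.vecMul_transpose]
    ext i j
    simp [vecMulVec_apply, Matrix.neg_mulVec]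
  have := hfull.congr_of_eventuallyEq heq
  simp [hM_eq] at this
  exact this
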